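/- Let ξ be a random variable with values in [1,∞). Then there exists a nondecreasing function φ: [1,∞) → [0,∞), slowly varying at ∞, such that lim_{x→∞} φ(x) = ∞ and E φ(ξ) < ∞. -/

import Mathlib

open MeasureTheory Filter Topology
open scoped ENNReal

noncomputable section

/-- **Lemma 2.2**: for any random variable `ξ` with values in `[1,∞)` there is a
nondecreasing function `φ : [1,∞) → [0,∞)`, slowly varying at `∞`, with
`lim_{x→∞} φ(x) = ∞` and `E φ(ξ) < ∞`. -/
theorem exists_slowly_varying_with_finite_expectation
    {Ω : Type*} [MeasurableSpace Ω] (P : Measure Ω) [IsProbabilityMeasure P]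
    (ξ : Ω → ℝ) (hξmeas : Measurable ξ) (hξ : ∀ ω, 1 ≤ ξ ω) :
    ∃ φ : ℝ → ℝ,
      MonotoneOn φ (Set.Ici 1) ∧
      (∀ x : ℝ, 1 ≤ x → 0 ≤ φ x) ∧
      (∀ c : ℝ, 0 < c → Tendsto (fun x => φ (c * x) / φ x) atTop (𝓝 1)) ∧
      Tendsto φ atTop atTop ∧
      (∫⁻ ω, ENNReal.ofReal (φ (ξ ω)) ∂P) < ∞ := by
  classical
  -- tail probabilities tend to zero
  have htail : Tendsto (fun t : ℕ => P {ω | (t : ℝ) < ξ ω}) atTop (𝓝 0) := by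
    have hempty : (⋂ n : ℕ, {ω | (n : ℝ) < ξ ω}) = ∅ := by
      ext ω
      simp only [Set.mem_iInter, Set.mem_setOf_eq, Set.mem_empty_iff_false, iff_false, not_forall,
        not_lt]
      obtain ⟨n, hn⟩ := exists_nat_ge (ξ ω)
      exact ⟨n, hn⟩
    have := MeasureTheory.tendsto_measure_iInter_atTop (μ := P)
      (s := fun n : ℕ => {ω | (n : ℝ) < ξ ω})
      (fun n => (measurableSet_lt measurable_const hξmeas).nullMeasurableSet)
      (fun m n hmn ω hω =>
        lt_of_le_of_lt (show (m : ℝ) ≤ (n : ℝ) from Nat.cast_le.mpr hmn) hω)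
      ⟨0, measure_ne_top P _⟩
    rw [hempty] at this
    simpa [Function.comp_def] using this
  -- choose thresholds b with small tails
  have hb : ∀ n : ℕ, ∃ t : ℝ, P {ω | t < ξ ω} ≤ 2⁻¹ ^ n := by
    intro n
    have hpos : (0 : ℝ≥0∞) < 2⁻¹ ^ n := by
      apply ENNReal.pow_pos
      simp
    obtain ⟨k, hk⟩ := (htail.eventually_lt_const hpos).exists
    exact ⟨k, hk.le⟩
  choose b hbspec using hb
  -- the fast-growing sequence a
  set a : ℕ → ℝ := fun n =>
    Nat.rec 1 (fun k ak => max (b (k + 1) + 1) (((k : ℝ) + 1) * ak + 1)) n with ha_def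
  have ha0 : a 0 = 1 := rfl
  have hasucc : ∀ n : ℕ, a (n + 1) = max (b (n + 1) + 1) (((n : ℝ) + 1) * a n + 1) := fun n => rfl
  have h1a : ∀ n : ℕ, 1 ≤ a n := by
    intro n
    induction n with
    | zero => simp [ha0]
    | succ k ih =>
      rw [hasucc]
      refine le_max_of_le_right ?_
      nlinarith [Nat.cast_nonneg (α := ℝ) k]
  have hsuper : ∀ n : ℕ, ((n : ℝ) + 1) * a n + 1 ≤ a (n + 1) := fun n => le_max_right _ _
  have hab : ∀ n : ℕ, b (n + 1) < a (n + 1) := by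
    intro n
    have := le_max_left (b (n + 1) + 1) (((n : ℝ) + 1) * a n + 1)
    rw [← hasucc] at this
    linarith
  have hastep : ∀ n : ℕ, a n + 1 ≤ a (n + 1) := by
    intro n
    have h1 := hsuper n
    have h2 := h1a n
    nlinarith [Nat.cast_nonneg (α := ℝ) n]
  have hamono : StrictMono a :=
    strictMono_nat_of_lt_succ fun n => by linarith [hastep n]
  have hna : ∀ n : ℕ, (n : ℝ) ≤ a n := by
    intro n
    induction n with
    | zero => simp [ha0]
    | succ k ih =>
      have := hastep k
      push_cast
      linarith
  -- the counting function
  set N : ℝ → ℕ := fun x => Nat.findGreatest (fun n => a n ≤ x) ⌊x⌋₊ with hN_def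
  -- characterization : for x ≥ 1, a n ≤ x ↔ n ≤ N x
  have hchar : ∀ x : ℝ, 1 ≤ x → ∀ n : ℕ, a n ≤ x ↔ n ≤ N x := by
    intro x hx n
    constructor
    · intro han
      exact Nat.le_findGreatest (Nat.le_floor ((hna n).trans han)) han
    · intro hn
      have hspec : a (N x) ≤ x :=
        Nat.findGreatest_spec (P := fun n => a n ≤ x) (m := 0) (Nat.zero_le _)
          (by simpa [ha0] using hx)
      exact le_trans (hamono.monotone hn) hspec
  have hNmono : ∀ x y : ℝ, 1 ≤ x → x ≤ y → N x ≤ N y := by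
    intro x y hx hxy
    exact (hchar y (hx.trans hxy) (N x)).1 (((hchar x hx (N x)).2 le_rfl).trans hxy)
  -- N x → ∞
  have hNtop : Tendsto (fun x => (N x : ℝ)) atTop atTop := by
    rw [tendsto_atTop]
    intro r
    filter_upwards [eventually_ge_atTop (max 1 (a ⌈r⌉₊))] with x hx
    have hx1 : (1 : ℝ) ≤ x := le_trans (le_max_left _ _) hx
    have : (⌈r⌉₊ : ℕ) ≤ N x := (hchar x hx1 _).1 (le_trans (le_max_right _ _) hx)
    calc r ≤ (⌈r⌉₊ : ℝ) := Nat.le_ceil r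
    _ ≤ (N x : ℝ) := by exact_mod_cast this
  -- key lemma : counting jump at ratio c ≥ 1 is at most 1
  have hkey : ∀ c : ℝ, 1 ≤ c → ∀ x : ℝ, 1 ≤ x → a ⌈c⌉₊ ≤ x → N (c * x) ≤ N x + 1 := by
    intro c hc x hx hax
    by_contra hgt
    push_neg at hgt
    have hcx1 : (1 : ℝ) ≤ c * x := by nlinarith
    have hk : (⌈c⌉₊ : ℕ) ≤ N x := (hchar x hx _).1 hax
    have h2 : a (N x + 2) ≤ c * x := (hchar (c * x) hcx1 _).2 hgt
    have h3 : ¬ a (N x + 1) ≤ x := by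
      intro h
      have := (hchar x hx (N x + 1)).1 h
      omega
    push_neg at h3
    have h4 : ((N x : ℝ) + 1 + 1) * a (N x + 1) + 1 ≤ a (N x + 2) := by
      have := hsuper (N x + 1)
      push_cast at this ⊢
      linarith
    have hcle : c ≤ (N x : ℝ) + 2 := by
      have h5 : c ≤ (⌈c⌉₊ : ℝ) := Nat.le_ceil c
      have h6 : (⌈c⌉₊ : ℝ) ≤ (N x : ℝ) := by exact_mod_cast hk
      linarith
    have hxpos : (0 : ℝ) < x := by linarith
    nlinarith
  refine ⟨fun x => (N x : ℝ), ?_, ?_, ?_, ?_, ?_⟩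
  · -- monotone
    intro x hx y _ hxy
    show (N x : ℝ) ≤ (N y : ℝ)
    exact_mod_cast hNmono x y hx hxy
  · -- nonneg
    intro x _
    positivity
  · -- slowly varying
    intro c hc
    rw [← tendsto_sub_nhds_zero_iff]
    apply squeeze_zero_norm' (a := fun x => 1 / (N x : ℝ))
    · -- eventual bound |N(cx)/N x − 1| ≤ 1 / N x
      have hev : ∀ᶠ x : ℝ in atTop, 1 ≤ (N x : ℝ) ∧ |(N (c * x) : ℝ) - (N x : ℝ)| ≤ 1 := by
        rcases le_or_gt 1 c with hc1 | hc1
        · filter_upwards [eventually_ge_atTop (max (a 1) (max 1 (a ⌈c⌉₊)))] with x hx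
          have hx1 : (1 : ℝ) ≤ x := le_trans ((le_max_left _ _).trans (le_max_right _ _)) hx
          have hax : a ⌈c⌉₊ ≤ x := le_trans ((le_max_right _ _).trans (le_max_right _ _)) hx
          have ha1 : a 1 ≤ x := le_trans (le_max_left _ _) hx
          have h1 : N x ≤ N (c * x) :=
            hNmono x (c * x) hx1 (le_mul_of_one_le_left (by linarith) hc1)
          have h2 : N (c * x) ≤ N x + 1 := hkey c hc1 x hx1 hax
          have hN1 : 1 ≤ N x := (hchar x hx1 1).1 ha1
          have h1' : (N x : ℝ) ≤ (N (c * x) : ℝ) := by exact_mod_cast h1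
          have h2' : (N (c * x) : ℝ) ≤ (N x : ℝ) + 1 := by exact_mod_cast h2
          exact ⟨by exact_mod_cast hN1, abs_le.mpr ⟨by linarith, by linarith⟩⟩
        · have hcinv : 1 ≤ c⁻¹ := (one_le_inv_iff₀.mpr ⟨hc, hc1.le⟩)
          filter_upwards [eventually_ge_atTop
            (max (a 1 / c) (max (1 / c) (a ⌈c⁻¹⌉₊ / c)))] with x hx
          have hxa : a 1 / c ≤ x := le_trans (le_max_left _ _) hx
          have hx1c : 1 / c ≤ x := le_trans ((le_max_left _ _).trans (le_max_right _ _)) hx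
          have hxac : a ⌈c⁻¹⌉₊ / c ≤ x := le_trans ((le_max_right _ _).trans (le_max_right _ _)) hx
          have hcx1 : (1 : ℝ) ≤ c * x := by
            rw [div_le_iff₀ hc] at hx1c; linarith [mul_comm x c]
          have hcxa1 : a 1 ≤ c * x := by
            rw [div_le_iff₀ hc] at hxa; linarith [mul_comm x c]
          have hcxa : a ⌈c⁻¹⌉₊ ≤ c * x := by
            rw [div_le_iff₀ hc] at hxac; linarith [mul_comm x c]
          have hx1 : (1 : ℝ) ≤ x := by
            have : c * x ≤ x := by nlinarith [hc.le]
            linarith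
          have h1 : N (c * x) ≤ N x := hNmono (c * x) x hcx1 (by nlinarith [hc.le])
          have h2 : N x ≤ N (c * x) + 1 := by
            have := hkey c⁻¹ hcinv (c * x) hcx1 hcxa
            rwa [inv_mul_cancel_left₀ hc.ne'] at this
          have hN1 : 1 ≤ N x := le_trans ((hchar (c * x) hcx1 1).1 hcxa1) h1
          have h1' : (N (c * x) : ℝ) ≤ (N x : ℝ) := by exact_mod_cast h1
          have h2' : (N x : ℝ) ≤ (N (c * x) : ℝ) + 1 := by exact_mod_cast h2
          exact ⟨by exact_mod_cast hN1, abs_le.mpr ⟨by linarith, by linarith⟩⟩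
      filter_upwards [hev] with x hx
      obtain ⟨hN1, hd⟩ := hx
      have hNpos : (0 : ℝ) < (N x : ℝ) := by linarith
      show ‖(N (c * x) : ℝ) / (N x : ℝ) - 1‖ ≤ 1 / (N x : ℝ)
      rw [Real.norm_eq_abs, div_sub_one hNpos.ne', abs_div, abs_of_pos hNpos]
      gcongr
    · exact tendsto_const_nhds.div_atTop hNtop
  · -- tendsto atTop
    exact hNtop
  · -- finite expectation
    set f : ℕ → Ω → ℝ≥0∞ :=
      fun k => Set.indicator {ω | a (k + 1) ≤ ξ ω} (1 : Ω → ℝ≥0∞) with hf_def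
    have hfm : ∀ k, Measurable (f k) := by
      intro k
      exact Measurable.indicator measurable_const (measurableSet_le measurable_const hξmeas)
    have hpt : ∀ ω, ENNReal.ofReal ((N (ξ ω) : ℝ)) ≤ ∑' k : ℕ, f k ω := by
      intro ω
      rw [ENNReal.ofReal_natCast]
      have hsum : ∀ k ∈ Finset.range (N (ξ ω)), f k ω = 1 := by
        intro k hk
        refine Set.indicator_of_mem ?_ _ |>.trans rfl
        exact (hchar (ξ ω) (hξ ω) (k + 1)).2 (Finset.mem_range.mp hk)
      calc (N (ξ ω) : ℝ≥0∞) = ∑ k ∈ Finset.range (N (ξ ω)), 1 := by simp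
      _ = ∑ k ∈ Finset.range (N (ξ ω)), f k ω := (Finset.sum_congr rfl hsum).symm
      _ ≤ ∑' k : ℕ, f k ω := ENNReal.sum_le_tsum _
    calc (∫⁻ ω, ENNReal.ofReal ((N (ξ ω) : ℝ)) ∂P)
        ≤ ∫⁻ ω, ∑' k : ℕ, f k ω ∂P := lintegral_mono hpt
    _ = ∑' k : ℕ, ∫⁻ ω, f k ω ∂P := lintegral_tsum fun k => (hfm k).aemeasurable
    _ ≤ ∑' k : ℕ, (2⁻¹ : ℝ≥0∞) ^ (k + 1) := by
        apply ENNReal.tsum_le_tsum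
        intro k
        have hmeq : ∫⁻ ω, f k ω ∂P = P {ω | a (k + 1) ≤ ξ ω} :=
          lintegral_indicator_one (measurableSet_le measurable_const hξmeas)
        rw [hmeq]
        refine le_trans (measure_mono ?_) (hbspec (k + 1))
        intro ω hω
        exact lt_of_lt_of_le (hab k) hω
    _ ≤ ∑' k : ℕ, (2⁻¹ : ℝ≥0∞) ^ k := by
        apply ENNReal.tsum_le_tsum
        intro k
        exact pow_le_pow_of_le_one (by simp) (by simp) (by omega)
    _ = (1 - 2⁻¹)⁻¹ := ENNReal.tsum_geometric _
    _ < ∞ := by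
        rw [ENNReal.one_sub_inv_two]
        simp
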